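/- Let ω be a primitive m-th root of unity (m ≥ 2). Then H_n(ωq, ω^2 q, ..., ω^{m-1} q) = ∏_{j ≤ n, m ∤ j} (1 - q^j), where H_n is the Rogers-Szegő polynomial in m-1 variables. -/

import Mathlib

/-- `(q)_n = (1-q)(1-q^2)⋯(1-q^n)`, with `(q)_0 = 1`. -/
noncomputable def qPoch (q : ℂ) (n : ℕ) : ℂ :=
  ∏ j ∈ Finset.range n, (1 - q ^ (j + 1))

/-- The Rogers-Szegő polynomial in `m-1` variables. -/
noncomputable def rogersSzegoMV (q : ℂ) (m n : ℕ) (t : Fin (m - 1) → ℂ) : ℂ :=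
  ∑ k ∈ Finset.Nat.antidiagonalTuple m n,
    (qPoch q n / ∏ i, qPoch q (k i)) *
      ∏ i : Fin (m - 1), t i ^ k (Fin.castLE (Nat.sub_le m 1) i)

open PowerSeries Finset

lemma qPoch_succ (q : ℂ) (n : ℕ) : qPoch q (n+1) = qPoch q n * (1 - q^(n+1)) :=
  Finset.prod_range_succ _ _

lemma qPoch_ne_zero {q : ℂ} (hq : ∀ j : ℕ, 1 ≤ j → q ^ j ≠ 1) (n : ℕ) : qPoch q n ≠ 0 := by
  refine Finset.prod_ne_zero_iff.2 fun j _ h => ?_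
  exact hq (j+1) (by omega) (by linear_combination -h)

/-- The `q`-exponential-type series `∑ c^k/(q)_k x^k`. -/
noncomputable def qExp (q c : ℂ) : PowerSeries ℂ := PowerSeries.mk fun k => c^k / qPoch q k

@[simp] lemma coeff_qExp (q c : ℂ) (n : ℕ) : coeff n (qExp q c) = c^n / qPoch q n :=
  coeff_mk _ _

lemma qExp_step {q : ℂ} (hq : ∀ j : ℕ, 1 ≤ j → q ^ j ≠ 1) (c : ℂ) :
    (1 - C c * X) * qExp q c = qExp q (c * q) := by
  ext n
  rw [sub_mul, one_mul, map_sub, mul_assoc]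
  cases n with
  | zero => simp [qPoch]
  | succ n =>
    rw [coeff_C_mul, coeff_succ_X_mul, coeff_qExp, coeff_qExp, coeff_qExp]
    have h1 := qPoch_ne_zero hq n
    have h2 : (1 : ℂ) - q^(n+1) ≠ 0 := fun h => hq (n+1) (by omega) (by linear_combination -h)
    rw [qPoch_succ]
    field_simp
    ring

lemma rescale_qExp (q c : ℂ) : rescale q (qExp q c) = qExp q (c * q) := by
  ext n
  rw [coeff_rescale, coeff_qExp, coeff_qExp, mul_pow]
  ring

lemma prod_sub_pow {m : ℕ} (hm : 0 < m) {ω : ℂ} (hω : IsPrimitiveRoot ω m) (x : ℂ) :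
    ∏ i ∈ range m, (x - ω^i) = x^m - 1 := by
  have : NeZero m := ⟨hm.ne'⟩
  have himg : Polynomial.nthRootsFinset m (1 : ℂ) = (range m).image (ω ^ ·) := by
    ext z
    simp only [Polynomial.mem_nthRootsFinset hm, mem_image, mem_range]
    constructor
    · intro hz
      obtain ⟨i, hi, rfl⟩ := hω.eq_pow_of_pow_eq_one hz
      exact ⟨i, hi, rfl⟩
    · rintro ⟨i, hi, rfl⟩
      rw [← pow_mul, mul_comm, pow_mul, hω.pow_eq_one, one_pow]
  have PL := Polynomial.X_pow_sub_one_eq_prod hm hω (R := ℂ)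
  rw [himg, Finset.prod_image (fun a ha b hb h => hω.injOn_pow ha hb h)] at PL
  have := congrArg (Polynomial.eval x) PL
  simp only [Polynomial.eval_prod, Polynomial.eval_sub, Polynomial.eval_pow, Polynomial.eval_X,
    Polynomial.eval_one, Polynomial.eval_C] at this
  exact this.symm

lemma prod_one_sub_mul {m : ℕ} (hm : 0 < m) {ω : ℂ} (hω : IsPrimitiveRoot ω m) (x : ℂ) :
    ∏ i ∈ range m, (1 - ω^i * x) = 1 - x^m := by
  rcases eq_or_ne x 0 with rfl | hx
  · simp [zero_pow hm.ne']
  · have key : ∀ i : ℕ, 1 - ω^i * x = x * (x⁻¹ - ω^i) := by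
      intro i
      field_simp
    simp_rw [key]
    rw [Finset.prod_mul_distrib, Finset.prod_const, Finset.card_range, prod_sub_pow hm hω x⁻¹,
      mul_sub, mul_one, ← mul_pow, mul_inv_cancel₀ hx, one_pow]

lemma prod_shift {m : ℕ} (hm : 2 ≤ m) {ω : ℂ} (hω : IsPrimitiveRoot ω m) (f : ℂ → ℂ) :
    ∏ i ∈ range m, f (ω^(i+1)) = ∏ i ∈ range m, f (ω^i) := by
  obtain ⟨m', rfl⟩ : ∃ m', m = m' + 1 := ⟨m - 1, by omega⟩
  rw [Finset.prod_range_succ, Finset.prod_range_succ' (fun i => f (ω^i)), hω.pow_eq_one, pow_zero]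

lemma prod_one_sub_mul' {m : ℕ} (hm : 2 ≤ m) {ω : ℂ} (hω : IsPrimitiveRoot ω m) (x : ℂ) :
    ∏ i ∈ range m, (1 - ω^(i+1) * x) = 1 - x^m := by
  rw [prod_shift hm hω (fun c => 1 - c * x), prod_one_sub_mul (by omega) hω]

lemma prodLinearPS {m : ℕ} (hm : 2 ≤ m) {ω : ℂ} (hω : IsPrimitiveRoot ω m) :
    ∏ i ∈ range m, (1 - PowerSeries.C (ω^(i+1)) * PowerSeries.X) = 1 - PowerSeries.X ^ m := by
  have PL : (∏ i ∈ range m, (1 - Polynomial.C (ω^(i+1)) * Polynomial.X) : Polynomial ℂ)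
      = 1 - Polynomial.X ^ m := by
    apply Polynomial.funext
    intro x
    simp only [Polynomial.eval_prod, Polynomial.eval_sub, Polynomial.eval_mul,
      Polynomial.eval_one, Polynomial.eval_C, Polynomial.eval_X, Polynomial.eval_pow]
    exact prod_one_sub_mul' hm hω x
  have := congrArg (Polynomial.coeToPowerSeries.ringHom (R := ℂ)) PL
  simpa [map_prod, map_sub, map_mul, map_pow, map_one] using this

/-- `F = ∏_{i=1}^m E(ω^i)`. -/
noncomputable def Fg (q ω : ℂ) (m : ℕ) : PowerSeries ℂ := ∏ i ∈ range m, qExp q (ω^(i+1))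

/-- The `q^m`-Pochhammer `(q^m; q^m)_r`. -/
noncomputable def Qp (q : ℂ) (m r : ℕ) : ℂ := ∏ s ∈ Finset.range r, (1 - q ^ (m * (s+1)))

lemma Qp_ne_zero {q : ℂ} (hq : ∀ j : ℕ, 1 ≤ j → q ^ j ≠ 1) {m : ℕ} (hm : 2 ≤ m) (r : ℕ) :
    Qp q m r ≠ 0 := by
  refine Finset.prod_ne_zero_iff.2 fun s _ h => ?_
  exact hq (m * (s+1)) (by nlinarith) (by linear_combination -h)

lemma F_rec {m : ℕ} (hm : 2 ≤ m) {ω : ℂ} (hω : IsPrimitiveRoot ω m)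
    {q : ℂ} (hq : ∀ j : ℕ, 1 ≤ j → q ^ j ≠ 1) :
    (1 - X ^ m) * Fg q ω m = rescale q (Fg q ω m) := by
  rw [Fg, map_prod, ← prodLinearPS hm hω, ← Finset.prod_mul_distrib]
  exact Finset.prod_congr rfl fun i _ => by rw [qExp_step hq, rescale_qExp]

lemma Fg_coeff_zero (q ω : ℂ) (m : ℕ) : coeff 0 (Fg q ω m) = 1 := by
  rw [coeff_zero_eq_constantCoeff, Fg, map_prod]
  refine Finset.prod_eq_one fun i _ => ?_
  rw [← coeff_zero_eq_constantCoeff, coeff_qExp]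
  simp [qPoch]

lemma Fg_coeff (hm : 2 ≤ m) (hω : IsPrimitiveRoot ω m)
    (hq : ∀ j : ℕ, 1 ≤ j → q ^ j ≠ 1)
    (hrec : (1 - X ^ m) * Fg q ω m = rescale q (Fg q ω m))
    (h0 : coeff 0 (Fg q ω m) = 1)
    (hQ : ∀ r, Qp q m r ≠ 0) (n : ℕ) :
    coeff n (Fg q ω m) = if m ∣ n then 1 / Qp q m (n / m) else 0 := by
  induction n using Nat.strong_induction_on with
  | _ n IH =>
  rcases Nat.eq_zero_or_pos n with rfl | hn
  · simpa [Qp] using h0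
  have key : coeff n (Fg q ω m) - (if m ≤ n then coeff (n - m) (Fg q ω m) else 0)
      = q ^ n * coeff n (Fg q ω m) := by
    have := congrArg (coeff n) hrec
    rwa [coeff_rescale, sub_mul, one_mul, map_sub, coeff_X_pow_mul'] at this
  have hne : (1 : ℂ) - q ^ n ≠ 0 := fun h => hq n hn (by linear_combination -h)
  by_cases hmn : m ≤ n
  · rw [if_pos hmn, IH (n - m) (by omega)] at key
    by_cases hd : m ∣ n
    · have hd' : m ∣ n - m := Nat.dvd_sub hd dvd_rfl
      have hdiv : (n - m) / m = n / m - 1 := by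
        obtain ⟨c, rfl⟩ := hd
        rw [Nat.mul_div_cancel_left _ (by omega : 0 < m)]
        rw [(by rw [Nat.mul_sub_one] : m * c - m = m * (c - 1)), Nat.mul_div_cancel_left _ (by omega : 0 < m)]
      rw [if_pos hd', hdiv] at key
      have hQs : Qp q m (n / m) = Qp q m (n / m - 1) * (1 - q ^ n) := by
        have hr : 1 ≤ n / m := (Nat.one_le_div_iff (by omega)).2 hmn
        have hexp : m * ((n / m - 1) + 1) = n := by
          rw [(by omega : (n/m - 1) + 1 = n/m)]
          exact Nat.mul_div_cancel' hd
        conv_lhs => rw [(by omega : n/m = (n/m - 1) + 1)]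
        rw [Qp, Finset.prod_range_succ, ← Qp, hexp]
      have k2 : (1 - q^n) * coeff n (Fg q ω m) = 1 / Qp q m (n/m - 1) := by
        linear_combination key
      rw [if_pos hd, hQs, eq_div_iff (mul_ne_zero (hQ _) hne)]
      calc coeff n (Fg q ω m) * (Qp q m (n/m - 1) * (1 - q^n))
          = Qp q m (n/m - 1) * ((1 - q^n) * coeff n (Fg q ω m)) := by ring
        _ = Qp q m (n/m - 1) * (1 / Qp q m (n/m - 1)) := by rw [k2]
        _ = 1 := by rw [mul_one_div, div_self (hQ _)]
    · have hd' : ¬ m ∣ n - m := fun h => hd (by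
        have := Nat.dvd_add h (dvd_refl m)
        rwa [Nat.sub_add_cancel hmn] at this)
      rw [if_neg hd'] at key
      rw [if_neg hd]
      have : (1 - q ^ n) * coeff n (Fg q ω m) = 0 := by linear_combination key
      exact (mul_eq_zero.1 this).resolve_left hne
  · rw [if_neg hmn] at key
    have hd : ¬ m ∣ n := fun h => hmn (Nat.le_of_dvd hn h)
    rw [if_neg hd]
    have : (1 - q ^ n) * coeff n (Fg q ω m) = 0 := by linear_combination key
    exact (mul_eq_zero.1 this).resolve_left hne

noncomputable def cslot (q ω : ℂ) (m : ℕ) (i : ℕ) : ℂ := if i = m - 1 then 1 else ω^(i+1) * q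

noncomputable def Hs (q ω : ℂ) (m : ℕ) : PowerSeries ℂ := ∏ i ∈ range m, qExp q (cslot q ω m i)

variable {q ω : ℂ} {m : ℕ}

lemma Hs_rec (hm : 2 ≤ m) (hω : IsPrimitiveRoot ω m)
    (hstep : ∀ c : ℂ, (1 - C c * X) * qExp q c = qExp q (c * q))
    (hres : ∀ c : ℂ, rescale q (qExp q c) = qExp q (c * q)) :
    (1 - X ^ 1) * Hs q ω m = rescale q (Fg q ω m) := by
  obtain ⟨m', rfl⟩ : ∃ m', m = m' + 1 := ⟨m - 1, by omega⟩
  rw [pow_one, Fg, map_prod]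
  rw [Finset.prod_congr rfl (fun i _ => hres (ω^(i+1))), Hs, Finset.prod_range_succ,
    Finset.prod_range_succ (fun i => qExp q (ω^(i+1) * q))]
  have h1 : cslot q ω (m'+1) m' = 1 := if_pos (by omega)
  have h2 : (1 - X) * qExp q 1 = qExp q (ω^(m'+1) * q) := by
    have := hstep 1
    simp only [map_one, one_mul, mul_one] at this
    rw [this, hω.pow_eq_one, one_mul]
  rw [h1, ← mul_assoc, mul_comm (1 - X), mul_assoc, h2]
  congr 1
  refine Finset.prod_congr rfl fun i hi => ?_
  rw [cslot, if_neg (by simp at hi; omega)]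

lemma coeff_zero_Hs : coeff 0 (Hs q ω m) = 1 := by
  rw [coeff_zero_eq_constantCoeff, Hs, map_prod]
  refine Finset.prod_eq_one fun i _ => ?_
  rw [← coeff_zero_eq_constantCoeff, coeff_qExp]
  simp [qPoch]

lemma Hs_coeff (hm : 2 ≤ m) (hω : IsPrimitiveRoot ω m)
    (hq : ∀ j : ℕ, 1 ≤ j → q ^ j ≠ 1)
    (hrec : (1 - X ^ 1) * Hs q ω m = rescale q (Fg q ω m))
    (hFg : ∀ n, coeff n (Fg q ω m) = if m ∣ n then 1 / Qp q m (n / m) else 0)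
    (hQ : ∀ r, Qp q m r ≠ 0) (n : ℕ) :
    coeff n (Hs q ω m) = 1 / Qp q m (n / m) := by
  induction n with
  | zero => simpa [Qp] using coeff_zero_Hs
  | succ n IH =>
    have key : coeff (n+1) (Hs q ω m) - coeff n (Hs q ω m)
        = q ^ (n+1) * coeff (n+1) (Fg q ω m) := by
      have := congrArg (coeff (n+1)) hrec
      rwa [coeff_rescale, sub_mul, one_mul, map_sub, coeff_X_pow_mul',
        if_pos (by omega : 1 ≤ n + 1), Nat.add_sub_cancel] at this
    rw [hFg, IH] at key
    by_cases hd : m ∣ n + 1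
    · rw [if_pos hd] at key
      set r := (n+1)/m with hr
      have hmr : m * r = n + 1 := Nat.mul_div_cancel' hd
      have hr1 : 1 ≤ r := by
        rcases Nat.eq_zero_or_pos r with h | h
        · rw [h, mul_zero] at hmr; omega
        · exact h
      have h2 : r * m = n + 1 := by rw [mul_comm]; exact hmr
      have h3 : (r - 1) * m = n + 1 - m := by rw [Nat.sub_one_mul, h2]
      have h4 : m ≤ n + 1 := by
        calc m = 1 * m := (one_mul m).symm
        _ ≤ r * m := Nat.mul_le_mul_right m hr1
        _ = n + 1 := h2
      have hnm : n / m = r - 1 := by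
        rw [(show n = (m-1) + (r-1)*m by rw [h3]; omega),
          Nat.add_mul_div_right _ _ (by omega : 0 < m), Nat.div_eq_of_lt (by omega), Nat.zero_add]
      rw [hnm] at key
      have e1 : Qp q m r = Qp q m (r-1) * (1 - q^(n+1)) := by
        conv_lhs => rw [(by omega : r = (r - 1) + 1)]
        rw [Qp, Finset.prod_range_succ, ← Qp, (by omega : r - 1 + 1 = r), hmr]
      have h1 : coeff (n+1) (Hs q ω m) = 1 / Qp q m (r-1) + q^(n+1) * (1 / Qp q m r) := by
        linear_combination key
      rw [h1, e1]
      have n1 := hQ (r-1)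
      have n2 : (1 : ℂ) - q^(n+1) ≠ 0 := fun h => hq (n+1) (by omega) (by linear_combination -h)
      field_simp
      try ring
    · rw [if_neg hd, mul_zero] at key
      have h1 : coeff (n+1) (Hs q ω m) = 1 / Qp q m (n / m) := by linear_combination key
      rw [h1, Nat.succ_div, if_neg hd, Nat.add_zero]

lemma coeff_Hs_sum (n : ℕ) :
    coeff n (Hs q ω m) = ∑ k ∈ Finset.Nat.antidiagonalTuple m n,
      ∏ i : Fin m, (cslot q ω m (i : ℕ)) ^ (k i) / qPoch q (k i) := by
  rw [Hs, PowerSeries.coeff_prod]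
  refine Finset.sum_nbij' (fun l => fun i : Fin m => l (i : ℕ))
    (fun k => Finsupp.onFinset (range m) (fun j => if h : j < m then k ⟨j, h⟩ else 0)
      (fun j hj => by
        rw [Finset.mem_range]
        by_contra h
        exact hj (dif_neg h))) ?_ ?_ ?_ ?_ ?_
  · intro l hl
    rw [Finset.mem_finsuppAntidiag] at hl
    rw [Finset.Nat.mem_antidiagonalTuple, Fin.sum_univ_eq_sum_range]
    exact hl.1
  · intro k hk
    rw [Finset.Nat.mem_antidiagonalTuple] at hk
    rw [Finset.mem_finsuppAntidiag]
    constructor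
    · show ∑ j ∈ range m, (if h : j < m then k ⟨j, h⟩ else 0) = n
      rw [← Fin.sum_univ_eq_sum_range (fun j => if h : j < m then k ⟨j, h⟩ else 0)]
      rw [Finset.sum_congr rfl (fun (x : Fin m) _ => dif_pos x.isLt)]
      exact hk
    · exact Finsupp.support_onFinset_subset
  · intro l hl
    rw [Finset.mem_finsuppAntidiag] at hl
    ext a
    simp only [Finsupp.onFinset_apply]
    by_cases h : a < m
    · rw [dif_pos h]
    · rw [dif_neg h]
      by_contra hc
      have := hl.2 (Finsupp.mem_support_iff.2 (Ne.symm hc))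
      rw [Finset.mem_range] at this
      exact h this
  · intro k hk
    funext x
    simp only [Finsupp.onFinset_apply, dif_pos x.isLt]
  · intro l hl
    rw [← Fin.prod_univ_eq_prod_range (fun j => coeff (l j) (qExp q (cslot q ω m j)))]
    exact Finset.prod_congr rfl fun x _ => by rw [coeff_qExp]

lemma qPoch_split {m : ℕ} (hm : 2 ≤ m) (q : ℂ) (n : ℕ) :
    qPoch q n = (∏ j ∈ (Finset.range (n+1)).filter (fun j => ¬ m ∣ j), (1 - q^j)) * Qp q m (n/m) := by
  have him : (range n).image (fun j => j + 1) = (range (n+1)).filter (fun j => j ≠ 0) := by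
    ext j
    simp only [mem_image, mem_range, mem_filter]
    constructor
    · rintro ⟨a, ha, rfl⟩; omega
    · intro ⟨h1, h2⟩; exact ⟨j - 1, by omega, by omega⟩
  have h0 : qPoch q n = ∏ j ∈ (range (n+1)).filter (fun j => j ≠ 0), (1 - q^j) := by
    rw [qPoch, ← him, Finset.prod_image (fun a _ b _ h => by omega)]
  have hsplit := Finset.prod_filter_mul_prod_filter_not
    ((range (n+1)).filter (fun j => j ≠ 0)) (fun j => m ∣ j) (fun j => 1 - q^j)
  have e1 : ((range (n+1)).filter (fun j => j ≠ 0)).filter (fun j => ¬ m ∣ j)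
      = (range (n+1)).filter (fun j => ¬ m ∣ j) := by
    rw [Finset.filter_filter]
    refine Finset.filter_congr fun j _ => ?_
    constructor
    · exact fun h => h.2
    · exact fun h => ⟨fun h0 => h (h0 ▸ dvd_zero m), h⟩
  have e2 : ((range (n+1)).filter (fun j => j ≠ 0)).filter (fun j => m ∣ j)
      = (range (n/m)).image (fun s => m * (s+1)) := by
    ext j
    simp only [Finset.mem_filter, Finset.mem_range, Finset.mem_image]
    constructor
    · rintro ⟨⟨hj, hj0⟩, c, rfl⟩
      have hc1 : 1 ≤ c := by
        rcases Nat.eq_zero_or_pos c with h | h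
        · exact absurd (by rw [h, mul_zero]) hj0
        · exact h
      refine ⟨c - 1, ?_, by rw [Nat.sub_add_cancel hc1]⟩
      have : c ≤ n / m := by
        have := Nat.div_le_div_right (c := m) (by omega : m * c ≤ n)
        rwa [Nat.mul_div_cancel_left _ (by omega : 0 < m)] at this
      omega
    · rintro ⟨s, hs, rfl⟩
      have h1 : s + 1 ≤ n / m := hs
      have h2 : m * (s+1) ≤ m * (n/m) := Nat.mul_le_mul_left m h1
      have h3 : m * (n/m) ≤ n := Nat.mul_div_le n m
      exact ⟨⟨by omega, by positivity⟩, Dvd.intro _ rfl⟩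
  have e3 : ∏ j ∈ (range (n/m)).image (fun s => m * (s+1)), (1 - q^j) = Qp q m (n/m) := by
    rw [Finset.prod_image (fun a _ b _ h => by
      have : a + 1 = b + 1 := Nat.eq_of_mul_eq_mul_left (by omega) h
      omega)]
    rfl
  rw [h0, ← hsplit, e1, e2, e3, mul_comm]

/-- For `ω` a primitive `m`-th root of unity (`m ≥ 2`) and a generic parameter `q`,
`H_n(ωq, ω²q, …, ω^{m-1}q) = ∏_{j ≤ n, m∤j} (1 - q^j)`. -/
theorem rogersSzegoMV_at_q_times_roots_of_unity (m n : ℕ) (hm : 2 ≤ m) (ω : ℂ)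
    (hω : IsPrimitiveRoot ω m) (q : ℂ) (hq : ∀ j : ℕ, 1 ≤ j → q ^ j ≠ 1) :
    rogersSzegoMV q m n (fun i => ω ^ ((i : ℕ) + 1) * q) =
      ∏ j ∈ (Finset.range (n + 1)).filter (fun j => ¬ m ∣ j), (1 - q ^ j) := by
  have hQ : ∀ r, Qp q m r ≠ 0 := Qp_ne_zero hq hm
  have hFg := Fg_coeff hm hω hq (F_rec hm hω hq) (Fg_coeff_zero q ω m) hQ
  have hHs := Hs_coeff hm hω hq (Hs_rec hm hω (qExp_step hq) (fun c => rescale_qExp q c)) hFg hQ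
  have hL : rogersSzegoMV q m n (fun i => ω ^ ((i : ℕ) + 1) * q)
      = qPoch q n * coeff n (Hs q ω m) := by
    rw [coeff_Hs_sum, Finset.mul_sum, rogersSzegoMV]
    refine Finset.sum_congr rfl fun k hk => ?_
    have hnum : (∏ i : Fin m, cslot q ω m (i:ℕ) ^ k i)
        = ∏ i : Fin (m-1), (ω ^ ((i:ℕ) + 1) * q) ^ k (Fin.castLE (Nat.sub_le m 1) i) := by
      obtain ⟨M, rfl⟩ : ∃ M, m = M + 2 := ⟨m - 2, by omega⟩
      rw [Fin.prod_univ_castSucc (fun i : Fin (M+2) => cslot q ω (M+2) (i:ℕ) ^ k i)]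
      have hlast : cslot q ω (M+2) ((Fin.last (M+1) : ℕ)) ^ k (Fin.last (M+1)) = 1 := by
        rw [cslot, Fin.val_last, if_pos (by omega : M + 1 = M + 2 - 1), one_pow]
      rw [hlast, mul_one]
      refine Finset.prod_congr rfl fun i _ => ?_
      have hcast : Fin.castSucc i = Fin.castLE (Nat.sub_le (M+2) 1) i := Fin.ext rfl
      rw [← hcast, Fin.coe_castSucc, cslot, if_neg (by have := i.isLt; omega)]
    rw [← hnum, Finset.prod_div_distrib]
    ring
  rw [hL, hHs n, qPoch_split hm q n, mul_one_div, mul_div_assoc, div_self (hQ _), mul_one]
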